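/- Let q be a quadratic form on ℝ^{2n} decomposed as q(X', X'') = q|_{S^{σ⊥}}(X') + q|_S(X'') where ⟨Re q|_{S^{σ⊥}}⟩_{T,Im q|_{S^{σ⊥}}} is positive definite on ℝ^{2n'} for some T > 0. Suppose moreover |e^{tH_{Im q|_{S^{σ⊥}}}}X'| ≤ e^{Ct}|X'| for all t ∈ ℝ. Then the degree-0 homogeneous function f(X) = (1/T)∫₀^T [Re q(e^{tH_{Im q}}X) / |e^{tH_{Im q}}X|²] dt satisfies f(X) ≥ (1/C')·|X'|²/|X|² for some C' > 0 and all X = (X',X'') ≠ 0; in particular f(X) = 0 forces X' = 0. -/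

import Mathlib

open MeasureTheory

/-- Let `q(X',X'') = q|_{S^{σ⊥}}(X') + q|_S(X'')` be a quadratic form on
`ℝ^{2n'} × ℝ^{2n''}` with `Rq = Re q ≥ 0` satisfying, along the flows
(`Φ = e^{tH_{Im q}}`, `ψ' = e^{tH_{Im q|_{S^{σ⊥}}}}`),
`Rq(Φ_t X) = Rq'(ψ'_t X')` where `Rq' = Re q|_{S^{σ⊥}}`, and suppose the time average
`(1/T)∫₀^T Rq'(ψ'_t X') dt ≥ c|X'|²` is positive definite.  Then the degree-0 homogeneous
function `f(X) = (1/T)∫₀^T Rq(Φ_t X)/|Φ_t X|² dt` satisfies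
`f(X) ≥ (1/C')|X'|²/|X|²` for `X ≠ 0`; in particular `f(X) = 0` forces `X' = 0`. -/
theorem stmt_14 (n' n'' : ℕ) (T C : ℝ) (hT : 0 < T) (hC : 0 < C)
    (Rq : EuclideanSpace ℝ (Fin (2 * n')) × EuclideanSpace ℝ (Fin (2 * n'')) → ℝ)
    (Rq' : EuclideanSpace ℝ (Fin (2 * n')) → ℝ)
    (ψ' : ℝ → EuclideanSpace ℝ (Fin (2 * n')) → EuclideanSpace ℝ (Fin (2 * n')))
    (Φ : ℝ → EuclideanSpace ℝ (Fin (2 * n')) × EuclideanSpace ℝ (Fin (2 * n'')) →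
      EuclideanSpace ℝ (Fin (2 * n')) × EuclideanSpace ℝ (Fin (2 * n'')))
    (hfact : ∀ t X, Rq (Φ t X) = Rq' (ψ' t X.1))
    (hRq'pos : ∀ X', 0 ≤ Rq' X')
    (hψ'bd : ∀ t : ℝ, ∀ X', ‖ψ' t X'‖ ≤ Real.exp (C * t) * ‖X'‖)
    (hΦup : ∀ t ∈ Set.Icc (0:ℝ) T, ∀ X, ‖Φ t X‖ ≤ Real.exp (C * t) * ‖X‖)
    (hΦlow : ∀ t ∈ Set.Icc (0:ℝ) T, ∀ X, ‖X‖ ≤ Real.exp (C * t) * ‖Φ t X‖)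
    (havg : ∃ c > 0, ∀ X', c * ‖X'‖ ^ 2 ≤ (1 / T) * ∫ t in (0:ℝ)..T, Rq' (ψ' t X'))
    (hΦcont : ∀ X, ContinuousOn (fun t => Φ t X) (Set.Icc 0 T))
    (hψ'cont : ∀ X', ContinuousOn (fun t => ψ' t X') (Set.Icc 0 T))
    (hRqcont : Continuous Rq) (hRq'cont : Continuous Rq') :
    ∃ C' > 0, ∀ X : EuclideanSpace ℝ (Fin (2 * n')) × EuclideanSpace ℝ (Fin (2 * n'')),
      X ≠ 0 →
      (‖X.1‖ ^ 2 / ‖X‖ ^ 2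
          ≤ C' * ((1 / T) * ∫ t in (0:ℝ)..T, Rq (Φ t X) / ‖Φ t X‖ ^ 2)) ∧
      (((1 / T) * ∫ t in (0:ℝ)..T, Rq (Φ t X) / ‖Φ t X‖ ^ 2) = 0 → X.1 = 0) := by
  obtain ⟨c, hc, hcavg⟩ := havg
  have hE : (0:ℝ) < Real.exp (2 * C * T) := Real.exp_pos _
  refine ⟨Real.exp (2 * C * T) / c, by positivity, ?_⟩
  intro X hX
  have hXn : (0:ℝ) < ‖X‖ := by simpa using norm_pos_iff.mpr hX
  have hb : (0:ℝ) < ‖X‖ ^ 2 := by positivity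
  -- Φ t X ≠ 0 on [0,T]
  have hΦne : ∀ t ∈ Set.Icc (0:ℝ) T, (0:ℝ) < ‖Φ t X‖ := by
    intro t ht
    by_contra h
    push_neg at h
    have h0 : ‖Φ t X‖ = 0 := le_antisymm h (norm_nonneg _)
    have := hΦlow t ht X
    rw [h0, mul_zero] at this
    exact absurd this (not_le.mpr hXn)
  -- continuity / integrability
  have hIcc : Set.uIcc (0:ℝ) T = Set.Icc 0 T := Set.uIcc_of_le hT.le
  have hint1 : IntervalIntegrable (fun t => Rq (Φ t X) / ‖Φ t X‖ ^ 2) volume 0 T := by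
    apply ContinuousOn.intervalIntegrable
    rw [hIcc]
    exact (hRqcont.comp_continuousOn (hΦcont X)).div
      (((hΦcont X).norm).pow 2)
      (fun t ht => by have := hΦne t ht; positivity)
  have hint2 : IntervalIntegrable (fun t => Rq' (ψ' t X.1)) volume 0 T := by
    apply ContinuousOn.intervalIntegrable
    rw [hIcc]
    exact hRq'cont.comp_continuousOn (hψ'cont X.1)
  have hint3 : IntervalIntegrable
      (fun t => Rq' (ψ' t X.1) / (Real.exp (2 * C * T) * ‖X‖ ^ 2)) volume 0 T :=
    hint2.div_const _
  -- pointwise bound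
  have hpt : ∀ t ∈ Set.Icc (0:ℝ) T,
      Rq' (ψ' t X.1) / (Real.exp (2 * C * T) * ‖X‖ ^ 2) ≤ Rq (Φ t X) / ‖Φ t X‖ ^ 2 := by
    intro t ht
    have hne := hΦne t ht
    have hub : ‖Φ t X‖ ^ 2 ≤ Real.exp (2 * C * T) * ‖X‖ ^ 2 := by
      have h1 : ‖Φ t X‖ ≤ Real.exp (C * t) * ‖X‖ := hΦup t ht X
      have h2 : Real.exp (C * t) ≤ Real.exp (C * T) := by
        apply Real.exp_le_exp.mpr
        exact mul_le_mul_of_nonneg_left ht.2 hC.le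
      have h3 : ‖Φ t X‖ ≤ Real.exp (C * T) * ‖X‖ :=
        h1.trans (mul_le_mul_of_nonneg_right h2 (norm_nonneg _))
      have h4 : ‖Φ t X‖ ^ 2 ≤ (Real.exp (C * T) * ‖X‖) ^ 2 := by
        apply pow_le_pow_left₀ (norm_nonneg _) h3
      calc ‖Φ t X‖ ^ 2 ≤ (Real.exp (C * T) * ‖X‖) ^ 2 := h4
        _ = Real.exp (2 * C * T) * ‖X‖ ^ 2 := by
            rw [mul_pow, ← Real.exp_nat_mul]
            ring_nf
    rw [hfact t X]
    gcongr
    · exact hRq'pos _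
  have hmono : ∫ t in (0:ℝ)..T, Rq' (ψ' t X.1) / (Real.exp (2 * C * T) * ‖X‖ ^ 2)
      ≤ ∫ t in (0:ℝ)..T, Rq (Φ t X) / ‖Φ t X‖ ^ 2 :=
    intervalIntegral.integral_mono_on hT.le hint3 hint1 hpt
  have hdiv : ∫ t in (0:ℝ)..T, Rq' (ψ' t X.1) / (Real.exp (2 * C * T) * ‖X‖ ^ 2)
      = (∫ t in (0:ℝ)..T, Rq' (ψ' t X.1)) / (Real.exp (2 * C * T) * ‖X‖ ^ 2) :=
    intervalIntegral.integral_div _ _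
  set I := ∫ t in (0:ℝ)..T, Rq (Φ t X) / ‖Φ t X‖ ^ 2 with hI
  set J := ∫ t in (0:ℝ)..T, Rq' (ψ' t X.1) with hJ
  have hJlb : c * ‖X.1‖ ^ 2 ≤ (1 / T) * J := hcavg X.1
  have hIlb : J / (Real.exp (2 * C * T) * ‖X‖ ^ 2) ≤ I := by
    rw [← hdiv]; exact hmono
  have hmain : ‖X.1‖ ^ 2 / ‖X‖ ^ 2 ≤ Real.exp (2 * C * T) / c * ((1 / T) * I) := by
    have hJ' : c * T * ‖X.1‖ ^ 2 ≤ J := by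
      have := mul_le_mul_of_nonneg_left hJlb hT.le
      calc c * T * ‖X.1‖ ^ 2 = T * (c * ‖X.1‖ ^ 2) := by ring
        _ ≤ T * ((1 / T) * J) := this
        _ = J := by field_simp
    have h5 : c * T * ‖X.1‖ ^ 2 / (Real.exp (2 * C * T) * ‖X‖ ^ 2) ≤ I := by
      refine le_trans ?_ hIlb
      gcongr
    calc ‖X.1‖ ^ 2 / ‖X‖ ^ 2
        = Real.exp (2 * C * T) / c *
          ((1 / T) * (c * T * ‖X.1‖ ^ 2 / (Real.exp (2 * C * T) * ‖X‖ ^ 2))) := by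
          field_simp
      _ ≤ Real.exp (2 * C * T) / c * ((1 / T) * I) := by gcongr
  refine ⟨hmain, fun hzero => ?_⟩
  rw [hzero, mul_zero] at hmain
  have h0 : ‖X.1‖ ^ 2 / ‖X‖ ^ 2 = 0 :=
    le_antisymm hmain (div_nonneg (sq_nonneg _) hb.le)
  rcases div_eq_zero_iff.mp h0 with h | h
  · exact norm_eq_zero.mp (by nlinarith [norm_nonneg X.1])
  · exact absurd h hb.ne'
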